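/- For every natural number n and every family of real coefficients a₀, a₁, …, aₙ, if for all real x > 0 one has Σ_{k=0}^{n} aₖ · (d^k/dx^k)(e^{−1/x}) = 0 (where d^k/dx^k denotes the k-th iterated derivative of the function x ↦ exp(−x⁻¹)), then a₀ = a₁ = ⋯ = aₙ = 0. In other words, the iterated derivatives of x ↦ e^{−1/x} are linearly independent as functions on (0, ∞). -/

import Mathlib

open Polynomial Finset

noncomputable def Paux : ℕ → Polynomial ℝ
  | 0 => 1
  | (k+1) => Polynomial.X ^ 2 * (Paux k - Polynomial.derivative (Paux k))

lemma Paux_monic_deg (k : ℕ) : (Paux k).Monic ∧ (Paux k).natDegree = 2 * k := by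
  induction k with
  | zero => exact ⟨monic_one, by simp [Paux]⟩
  | succ k ih =>
    obtain ⟨hm, hd⟩ := ih
    have hne : Paux k ≠ 0 := hm.ne_zero
    have hdlt : (Polynomial.derivative (Paux k)).degree < (Paux k).degree :=
      Polynomial.degree_derivative_lt hne
    have hsub : (Paux k - Polynomial.derivative (Paux k)).Monic := by
      have := hm.add_of_left (q := -(Polynomial.derivative (Paux k)))
        (by simpa using hdlt)
      simpa [sub_eq_add_neg] using this
    have hsubdeg : (Paux k - Polynomial.derivative (Paux k)).natDegree = 2 * k := by
      rw [← hd]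
      exact Polynomial.natDegree_eq_of_degree_eq
        (Polynomial.degree_sub_eq_left_of_degree_lt hdlt)
    constructor
    · exact (monic_X_pow 2).mul hsub
    · rw [show Paux (k+1) = Polynomial.X ^ 2 * (Paux k - Polynomial.derivative (Paux k)) from rfl,
        ((monic_X_pow (R := ℝ) 2)).natDegree_mul hsub, natDegree_X_pow, hsubdeg]
      ring

lemma iter_formula (k : ℕ) : ∀ x : ℝ, 0 < x →
    iteratedDeriv k (fun t : ℝ => Real.exp (-t⁻¹)) x
      = (Paux k).eval x⁻¹ * Real.exp (-x⁻¹) := by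
  induction k with
  | zero => intro x _; simp [Paux]
  | succ k ih =>
    intro x hx
    have hx0 : x ≠ 0 := ne_of_gt hx
    rw [iteratedDeriv_succ]
    have hev : iteratedDeriv k (fun t : ℝ => Real.exp (-t⁻¹))
        =ᶠ[nhds x] (fun y : ℝ => (Paux k).eval y⁻¹ * Real.exp (-y⁻¹)) :=
      (isOpen_Ioi.eventually_mem hx).mono (fun y hy => ih y hy)
    rw [hev.deriv_eq]
    have h1 : HasDerivAt (fun y : ℝ => y⁻¹) (-(x ^ 2)⁻¹) x := hasDerivAt_inv hx0
    have h2 : HasDerivAt (fun y : ℝ => (Paux k).eval y⁻¹)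
        ((Polynomial.derivative (Paux k)).eval x⁻¹ * -(x ^ 2)⁻¹) x :=
      ((Paux k).hasDerivAt x⁻¹).comp x h1
    have h3 : HasDerivAt (fun y : ℝ => Real.exp (-y⁻¹))
        (Real.exp (-x⁻¹) * (x ^ 2)⁻¹) x := by
      have := (Real.hasDerivAt_exp (-x⁻¹)).comp x h1.neg
      exact this.congr_deriv (by ring)
    have h4 := (h2.mul h3).deriv
    rw [show (fun y : ℝ => (Paux k).eval y⁻¹ * Real.exp (-y⁻¹)) = (fun y : ℝ => (Paux k).eval y⁻¹) * (fun y : ℝ => Real.exp (-y⁻¹)) from rfl, h4]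
    have : (Paux (k+1)).eval x⁻¹
        = (x⁻¹) ^ 2 * ((Paux k).eval x⁻¹ - (Polynomial.derivative (Paux k)).eval x⁻¹) := by
      show (Polynomial.X ^ 2 * (Paux k - Polynomial.derivative (Paux k))).eval x⁻¹ = _
      simp
    rw [this]
    field_simp
    ring

/-- the iterated derivatives of `x ↦ exp (-1/x)` are linearly
independent as functions on `(0, ∞)`: if `∑_{k=0}^{n} aₖ (d^k/dx^k) e^{-1/x} = 0`
for all `x > 0`, then all the coefficients `aₖ` vanish. -/
theorem stmt19 (n : ℕ) (a : ℕ → ℝ)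
    (h : ∀ x : ℝ, 0 < x →
      ∑ k ∈ Finset.range (n + 1),
        a k * iteratedDeriv k (fun t : ℝ => Real.exp (-t⁻¹)) x = 0) :
    ∀ k ≤ n, a k = 0 := by
  -- key lemma: top coefficient vanishes
  have key : ∀ (m : ℕ) (b : ℕ → ℝ),
      (∀ x : ℝ, 0 < x →
        ∑ k ∈ Finset.range (m + 1),
          b k * iteratedDeriv k (fun t : ℝ => Real.exp (-t⁻¹)) x = 0) → b m = 0 := by
    intro m b hb
    set Q : Polynomial ℝ := ∑ k ∈ Finset.range (m + 1), Polynomial.C (b k) * Paux k with hQdef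
    have hQeval : ∀ y : ℝ, 0 < y → Q.eval y = 0 := by
      intro y hy
      have hyinv : (0:ℝ) < y⁻¹ := by positivity
      have := hb y⁻¹ hyinv
      have hrw : ∀ k ∈ Finset.range (m + 1),
          b k * iteratedDeriv k (fun t : ℝ => Real.exp (-t⁻¹)) y⁻¹
            = b k * (Paux k).eval y * Real.exp (-y) := by
        intro k _
        rw [iter_formula k y⁻¹ hyinv, inv_inv]
        ring
      rw [Finset.sum_congr rfl hrw] at this
      have hfac : (∑ k ∈ Finset.range (m + 1), b k * (Paux k).eval y) * Real.exp (-y) = 0 := by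
        rw [Finset.sum_mul]; exact this
      have hsum : ∑ k ∈ Finset.range (m + 1), b k * (Paux k).eval y = 0 :=
        by
          rcases mul_eq_zero.mp hfac with h' | h'
          · exact h'
          · exact absurd h' (Real.exp_ne_zero _)
      simpa [hQdef, Polynomial.eval_finset_sum] using hsum
    have hQ0 : Q = 0 := by
      apply Polynomial.eq_zero_of_infinite_isRoot
      apply Set.Infinite.mono (s := Set.Ioi (0:ℝ))
      · intro y hy; exact hQeval y hy
      · exact Set.Ioi_infinite 0
    have hcoeff : Q.coeff (2 * m) = b m := by
      rw [hQdef, Polynomial.finset_sum_coeff]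
      rw [Finset.sum_range_succ]
      have hzero : ∀ k ∈ Finset.range m, (Polynomial.C (b k) * Paux k).coeff (2 * m) = 0 := by
        intro k hk
        rw [Polynomial.coeff_C_mul]
        rw [Polynomial.coeff_eq_zero_of_natDegree_lt, mul_zero]
        rw [(Paux_monic_deg k).2]
        have := Finset.mem_range.mp hk
        omega
      rw [Finset.sum_eq_zero hzero, zero_add, Polynomial.coeff_C_mul]
      have := (Paux_monic_deg m).1
      have hd := (Paux_monic_deg m).2
      rw [← hd, Polynomial.Monic.coeff_natDegree this, mul_one]
    rw [hQ0] at hcoeff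
    simpa using hcoeff.symm
  induction n with
  | zero =>
    intro k hk
    interval_cases k
    exact key 0 a h
  | succ n ih =>
    intro k hk
    have htop : a (n + 1) = 0 := key (n + 1) a h
    rcases Nat.lt_or_ge k (n + 1) with hk' | hk'
    · apply ih _ k (Nat.lt_succ_iff.mp hk')
      intro x hx
      have := h x hx
      rw [Finset.sum_range_succ, htop, zero_mul, add_zero] at this
      exact this
    · have : k = n + 1 := le_antisymm hk hk'
      rw [this]; exact htop
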